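/- Let T be a tree on n vertices and S a global defensive alliance in T with |S| = k. Let E_Y be the set of edges of T with both endpoints outside S. Then |E_Y| ≤ 2k − n/2 − 1. -/

import Mathlib

open SimpleGraph Finset
open scoped Classical

/-- The closed neighborhood `N[v]` of a vertex `v`. -/
noncomputable def closedNbhd {V : Type*} [Fintype V] (G : SimpleGraph V) (v : V) : Finset V :=
  insert v (Finset.univ.filter (fun u => G.Adj v u))

/-- `S` is a dominating set: every vertex outside `S` has a neighbor in `S`. -/
def Dominating {V : Type*} [Fintype V] (G : SimpleGraph V) (S : Finset V) : Prop :=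
  ∀ v, v ∉ S → ∃ u ∈ S, G.Adj v u

/-- `S` is a global defensive alliance. -/
def GlobalDefensiveAlliance {V : Type*} [Fintype V] (G : SimpleGraph V) (S : Finset V) : Prop :=
  Dominating G S ∧ ∀ v ∈ S, (closedNbhd G v \ S).card ≤ (closedNbhd G v ∩ S).card

/-- `S` is a global offensive alliance. -/
def GlobalOffensiveAlliance {V : Type*} [Fintype V] (G : SimpleGraph V) (S : Finset V) : Prop :=
  Dominating G S ∧ ∀ v, v ∉ S → (∃ u ∈ S, G.Adj v u) →
    (closedNbhd G v \ S).card ≤ (closedNbhd G v ∩ S).card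

/-- Edges with both endpoints in `S`. -/
noncomputable def edgesInside {V : Type*} [Fintype V] (G : SimpleGraph V) (S : Finset V) :
    Finset (Sym2 V) :=
  G.edgeFinset.filter (fun e => ∀ x ∈ e, x ∈ S)

/-- Edges with both endpoints outside `S`. -/
noncomputable def edgesOutside {V : Type*} [Fintype V] (G : SimpleGraph V) (S : Finset V) :
    Finset (Sym2 V) :=
  G.edgeFinset.filter (fun e => ∀ x ∈ e, x ∉ S)

/-- Edges with exactly one endpoint in `S`. -/
noncomputable def edgesBetween {V : Type*} [Fintype V] (G : SimpleGraph V) (S : Finset V) :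
    Finset (Sym2 V) :=
  G.edgeFinset.filter (fun e => (∃ x ∈ e, x ∈ S) ∧ (∃ x ∈ e, x ∉ S))

/-- The global defensive alliance number `γ_a(G)`. -/
noncomputable def gammaA {V : Type*} [Fintype V] (G : SimpleGraph V) : ℕ :=
  sInf {k | ∃ S : Finset V, GlobalDefensiveAlliance G S ∧ S.card = k}

/-- The global offensive alliance number `γ_o(G)`. -/
noncomputable def gammaO {V : Type*} [Fintype V] (G : SimpleGraph V) : ℕ :=
  sInf {k | ∃ S : Finset V, GlobalOffensiveAlliance G S ∧ S.card = k}

section Aux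
variable {V : Type*} [Fintype V] (G : SimpleGraph V) (S : Finset V)

-- tripartition of edges
lemma tripart :
    (edgesInside G S).card + (edgesBetween G S).card + (edgesOutside G S).card
      = G.edgeFinset.card := by
  unfold edgesInside edgesBetween edgesOutside
  rw [Finset.card_filter, Finset.card_filter, Finset.card_filter,
    ← Finset.sum_add_distrib, ← Finset.sum_add_distrib, Finset.card_eq_sum_ones]
  refine Finset.sum_congr rfl ?_
  intro e he
  induction e with
  | _ a b =>
    by_cases ha : a ∈ S <;> by_cases hb : b ∈ S <;>
      simp [Sym2.mem_iff, ha, hb]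

-- between edges ↔ ordered pairs (in, out)
lemma between_card :
    ((S ×ˢ (Finset.univ \ S)).filter (fun p => G.Adj p.1 p.2)).card
      = (edgesBetween G S).card := by
  refine Finset.card_bij (fun p _ => s(p.1, p.2)) ?_ ?_ ?_
  · rintro ⟨a, b⟩ h
    simp only [Finset.mem_filter, Finset.mem_product, Finset.mem_sdiff] at h
    obtain ⟨⟨ha, _, hb⟩, hadj⟩ := h
    simp only [edgesBetween, Finset.mem_filter, mem_edgeFinset, mem_edgeSet]
    refine ⟨hadj, ⟨a, ?_, ha⟩, ⟨b, ?_, hb⟩⟩ <;> simp [Sym2.mem_iff]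
  · rintro ⟨a, b⟩ h ⟨c, d⟩ h' heq
    simp only [Finset.mem_filter, Finset.mem_product, Finset.mem_sdiff] at h h'
    rw [Sym2.eq_iff] at heq
    rcases heq with ⟨rfl, rfl⟩ | ⟨rfl, rfl⟩
    · rfl
    · exact absurd h.1.1 h'.1.2.2
  · intro e he
    simp only [edgesBetween, Finset.mem_filter, mem_edgeFinset] at he
    obtain ⟨hee, ⟨x, hxe, hxS⟩, ⟨y, hye, hyS⟩⟩ := he
    refine ⟨(x, y), ?_, ?_⟩
    · simp only [Finset.mem_filter, Finset.mem_product, Finset.mem_sdiff]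
      refine ⟨⟨hxS, Finset.mem_univ y, hyS⟩, ?_⟩
      induction e with
      | _ a b =>
        rw [mem_edgeSet] at hee
        simp only [Sym2.mem_iff] at hxe hye
        rcases hxe with rfl | rfl <;> rcases hye with rfl | rfl
        · exact absurd hxS hyS
        · exact hee
        · exact hee.symm
        · exact absurd hxS hyS
    · induction e with
      | _ a b =>
        simp only [Sym2.mem_iff] at hxe hye
        rw [Sym2.eq_iff]
        rcases hxe with rfl | rfl <;> rcases hye with rfl | rfl
        · exact absurd hxS hyS
        · left; exact ⟨rfl, rfl⟩
        · right; exact ⟨rfl, rfl⟩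
        · exact absurd hxS hyS

-- inside edges: ordered pairs both in S count edges twice
lemma inside_card :
    ((S ×ˢ S).filter (fun p => G.Adj p.1 p.2)).card = 2 * (edgesInside G S).card := by
  rw [Finset.card_eq_sum_card_fiberwise (f := fun p : V × V => s(p.1, p.2))
      (t := edgesInside G S) ?_, Finset.sum_congr rfl ?_, Finset.sum_const,
      smul_eq_mul, mul_comm]
  · intro e he
    induction e with
    | _ a b =>
      have hab : G.Adj a b := by
        have := (Finset.mem_filter.1 he).1
        rwa [mem_edgeFinset, mem_edgeSet] at this
      have haS : a ∈ S := (Finset.mem_filter.1 he).2 a (by simp)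
      have hbS : b ∈ S := (Finset.mem_filter.1 he).2 b (by simp)
      have : ((S ×ˢ S).filter (fun p => G.Adj p.1 p.2)).filter
          (fun p => s(p.1, p.2) = s(a, b)) = {(a, b), (b, a)} := by
        ext ⟨x, y⟩
        simp only [Finset.mem_filter, Finset.mem_product, Finset.mem_insert,
          Finset.mem_singleton, Prod.mk.injEq, Sym2.eq_iff]
        constructor
        · rintro ⟨_, (⟨rfl, rfl⟩ | ⟨rfl, rfl⟩)⟩
          · left; exact ⟨rfl, rfl⟩
          · right; exact ⟨rfl, rfl⟩
        · rintro (⟨rfl, rfl⟩ | ⟨rfl, rfl⟩)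
          · exact ⟨⟨⟨haS, hbS⟩, hab⟩, Or.inl ⟨rfl, rfl⟩⟩
          · exact ⟨⟨⟨hbS, haS⟩, hab.symm⟩, Or.inr ⟨rfl, rfl⟩⟩
      rw [this, Finset.card_insert_of_notMem, Finset.card_singleton]
      simp only [Finset.mem_singleton, Prod.mk.injEq, not_and]
      intro h; exact absurd h hab.ne
  · rintro ⟨a, b⟩ h
    simp only [Finset.mem_coe, Finset.mem_filter, Finset.mem_product] at h
    simp only [Finset.mem_coe, edgesInside, Finset.mem_filter, mem_edgeFinset, mem_edgeSet]
    refine ⟨h.2, ?_⟩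
    intro x hx
    rcases Sym2.mem_iff.1 hx with rfl | rfl
    · exact h.1.1
    · exact h.1.2

lemma pair_card_eq_sum (A B : Finset V) :
    ((A ×ˢ B).filter (fun p => G.Adj p.1 p.2)).card
      = ∑ v ∈ A, (B.filter (fun u => G.Adj v u)).card := by
  rw [Finset.card_filter, Finset.sum_product]
  exact Finset.sum_congr rfl fun v _ => (Finset.card_filter _ _).symm

end Aux


/-- For a global defensive alliance S of size k in a tree on n vertices,
the number of edges with both endpoints outside S is at most 2k - n/2 - 1. -/
theorem stmt_5 {V : Type*} [Fintype V] (G : SimpleGraph V) (hT : G.IsTree)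
    (S : Finset V) (hS : GlobalDefensiveAlliance G S) (k : ℕ) (hk : S.card = k) :
    ((edgesOutside G S).card : ℝ) ≤ 2 * k - (Fintype.card V : ℝ) / 2 - 1 := by
  have hn : G.edgeFinset.card + 1 = Fintype.card V := hT.card_edgeFinset
  -- domination: n - k ≤ E_B
  have hdom : (Finset.univ \ S).card ≤ (edgesBetween G S).card := by
    choose f hfS hfadj using hS.1
    have := Finset.card_le_card_of_injOn
      (f := fun v => if h : v ∈ S then s(v, v) else s(v, f v h)) (s := Finset.univ \ S)
      (t := edgesBetween G S) ?_ ?_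
    · exact this
    · intro v hv
      have hv' : v ∉ S := (Finset.mem_sdiff.1 hv).2
      simp only [dif_neg hv']
      simp only [Finset.mem_coe, edgesBetween, Finset.mem_filter, mem_edgeFinset, mem_edgeSet]
      exact ⟨hfadj v hv', ⟨f v hv', by simp, hfS v hv'⟩, ⟨v, by simp, hv'⟩⟩
    · intro v hv w hw heq
      have hv' : v ∉ S := (Finset.mem_sdiff.1 hv).2
      have hw' : w ∉ S := (Finset.mem_sdiff.1 hw).2
      simp only [dif_neg hv', dif_neg hw', Sym2.eq_iff] at heq
      rcases heq with ⟨rfl, _⟩ | ⟨h1, h2⟩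
      · rfl
      · subst h1
        exact (hv' (hfS w hw')).elim
  -- alliance: E_B ≤ k + 2 E_S
  have halliance : (edgesBetween G S).card ≤ k + 2 * (edgesInside G S).card := by
    rw [← between_card, ← inside_card, pair_card_eq_sum, pair_card_eq_sum, ← hk,
      Finset.card_eq_sum_ones S, ← Finset.sum_add_distrib]
    refine Finset.sum_le_sum ?_
    intro v hv
    have h1 := hS.2 v hv
    have e1 : closedNbhd G v \ S = (Finset.univ \ S).filter (fun u => G.Adj v u) := by
      ext x
      simp only [closedNbhd, Finset.mem_sdiff, Finset.mem_insert, Finset.mem_filter,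
        Finset.mem_univ, true_and]
      constructor
      · rintro ⟨(rfl | h), hx⟩
        · exact absurd hv hx
        · exact ⟨hx, h⟩
      · rintro ⟨hx, h⟩
        exact ⟨Or.inr h, hx⟩
    have e2 : closedNbhd G v ∩ S = insert v (S.filter (fun u => G.Adj v u)) := by
      ext x
      simp only [closedNbhd, Finset.mem_inter, Finset.mem_insert, Finset.mem_filter,
        Finset.mem_univ, true_and]
      constructor
      · rintro ⟨(rfl | h), hx⟩
        · exact Or.inl rfl
        · exact Or.inr ⟨hx, h⟩
      · rintro (rfl | ⟨hx, h⟩)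
        · exact ⟨Or.inl rfl, hv⟩
        · exact ⟨Or.inr h, hx⟩
    rw [e1, e2] at h1
    calc ((Finset.univ \ S).filter (fun u => G.Adj v u)).card
        ≤ (insert v (S.filter (fun u => G.Adj v u))).card := h1
      _ ≤ 1 + (S.filter (fun u => G.Adj v u)).card := by
          rw [add_comm]; exact Finset.card_insert_le _ _
  have htri := tripart G S
  -- numbers
  have hkn : k ≤ Fintype.card V := by
    rw [← hk, ← Finset.card_univ]
    exact Finset.card_le_card (Finset.subset_univ S)
  have hcompl : (Finset.univ \ S).card = Fintype.card V - k := by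
    rw [Finset.card_sdiff_of_subset (Finset.subset_univ S), Finset.card_univ, hk]
  set eS := (edgesInside G S).card
  set eB := (edgesBetween G S).card
  set eY := (edgesOutside G S).card
  have hnat : eS + eB + eY + 1 = Fintype.card V := by rw [htri]; exact hn
  have h1 : (eS : ℝ) + eB + eY + 1 = Fintype.card V := by exact_mod_cast hnat
  have h2 : (Fintype.card V : ℝ) - k ≤ eB := by
    have : ((Fintype.card V - k : ℕ) : ℝ) ≤ eB := by exact_mod_cast hcompl ▸ hdom
    rwa [Nat.cast_sub hkn] at this
  have h3 : (eB : ℝ) ≤ k + 2 * eS := by exact_mod_cast halliance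
  linarith
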